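/- Fix a vertex v, and for every ancestor u of v (a vertex u ≠ v from which v is reachable) consider the lexicographically-first shortest path P(u, v). For every vertex x ≠ v that lies on some P(u, v), the vertex immediately following x is the same in every path P(u, v) that contains x. Hence the union of the paths P(u, v) over all ancestors u of v is a tree T_v in which every vertex other than v has a unique outgoing edge, and all paths lead to the sink v. -/

import Mathlib

/-- `L` is a directed walk from `u` to `v`: a nonempty list of vertices starting at `u`,
ending at `v`, with consecutive vertices joined by edges. Its number of edges is `L.length - 1`. -/
def IsWalk {V : Type} (E : V → V → Prop) (u v : V) (L : List V) : Prop :=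
  L ≠ [] ∧ L.head? = some u ∧ L.getLast? = some v ∧ L.Chain' E

/-- A directed path: a walk with pairwise distinct vertices. -/
def IsPath {V : Type} (E : V → V → Prop) (u v : V) (L : List V) : Prop :=
  IsWalk E u v L ∧ L.Nodup

/-- The weight of a walk: the sum of the weights of its consecutive edges
(the trivial walk has weight 0). -/
def walkWeight {V : Type} (w : V → V → ℝ) (L : List V) : ℝ :=
  ((L.zip L.tail).map fun e => w e.1 e.2).sum

/-- `v` is reachable from `u`. -/
def Reaches {V : Type} (E : V → V → Prop) (u v : V) : Prop :=
  ∃ L, IsWalk E u v L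

/-- BFS level: the minimum number of edges of a directed walk from `s` to `v`. -/
noncomputable def level {V : Type} (E : V → V → Prop) (s v : V) : ℕ :=
  sInf {k | ∃ L, IsWalk E s v L ∧ L.length = k + 1}

/-- `L` is the lexicographically-first shortest path from `u` to `v`: a minimum-weight
directed path from `u` to `v` whose reversed sequence of vertex indices is
lexicographically smallest among all minimum-weight directed paths from `u` to `v`. -/
def IsLexFirstSP {V : Type} (E : V → V → Prop) (w : V → V → ℝ) (idx : V → ℕ)
    (u v : V) (L : List V) : Prop :=
  IsPath E u v L ∧
  (∀ M, IsPath E u v M → walkWeight w L ≤ walkWeight w M) ∧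
  (∀ M, IsPath E u v M → walkWeight w M = walkWeight w L →
    ¬ List.Lex (· < ·) (M.reverse.map idx) (L.reverse.map idx))

/-- `pdist E w u v` is the minimum weight `d(u, v)` of a directed path from `u` to `v`
(for `v` reachable from `u`); in particular `pdist E w u u = 0`, the weight of the
trivial path. -/
noncomputable def pdist {V : Type} (E : V → V → Prop) (w : V → V → ℝ) (u v : V) : ℝ :=
  sInf {r : ℝ | ∃ L, IsPath E u v L ∧ walkWeight w L = r}

section Helpers

variable {V : Type} {E : V → V → Prop} {w : V → V → ℝ} {idx : V → ℕ}

lemma walkWeight_cons_cons (w : V → V → ℝ) (a b : V) (l : List V) :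
    walkWeight w (a :: b :: l) = w a b + walkWeight w (b :: l) := by
  simp [walkWeight, List.zip]

lemma walkWeight_singleton (w : V → V → ℝ) (a : V) : walkWeight w [a] = 0 := by
  simp [walkWeight]

lemma walkWeight_split (w : V → V → ℝ) (x : V) :
    ∀ (A T : List V), walkWeight w (A ++ x :: T)
      = walkWeight w (A ++ [x]) + walkWeight w (x :: T)
  | [], T => by simp [walkWeight_singleton]
  | [a], T => by simp [walkWeight_cons_cons, walkWeight_singleton]
  | a :: b :: A, T => by
    have ih := walkWeight_split w x (b :: A) T
    simp only [List.cons_append, walkWeight_cons_cons] at *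
    rw [ih]; ring

lemma path_suffix {u v x : V} {A T : List V}
    (h : IsPath E u v (A ++ x :: T)) : IsPath E x v (x :: T) := by
  obtain ⟨⟨_, _, hlast, hch⟩, hnd⟩ := h
  refine ⟨⟨by simp, rfl, ?_, (List.isChain_append.1 hch).2.1⟩, hnd.of_append_right⟩
  rwa [List.getLast?_append_of_ne_nil _ (by simp)] at hlast

lemma pairwise_idx (htopo : ∀ a b, E a b → idx a < idx b) {L : List V}
    (h : L.Chain' E) : L.Pairwise (fun a b => idx a < idx b) := by
  have hlt : L.Chain' (fun a b => idx a < idx b) := h.imp (fun a b hab => htopo a b hab)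
  haveI : IsTrans V (fun a b => idx a < idx b) := ⟨fun _ _ _ => lt_trans⟩
  exact List.isChain_iff_pairwise.1 hlt

lemma splice (htopo : ∀ a b, E a b → idx a < idx b) {u v x : V} {A T M : List V}
    (h1 : IsPath E u v (A ++ x :: T)) (h2 : IsPath E x v (x :: M)) :
    IsPath E u v (A ++ x :: M) := by
  obtain ⟨⟨_, hhead, hlast, hch⟩, hnd⟩ := h1
  obtain ⟨⟨_, _, hlast2, hch2⟩, hnd2⟩ := h2
  have hA : ∀ a ∈ A, idx a < idx x := by
    have hp := pairwise_idx htopo hch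
    rw [List.pairwise_append] at hp
    exact fun a ha => hp.2.2 a ha x (by simp)
  have hM : ∀ m ∈ M, idx x < idx m := by
    have hp := pairwise_idx htopo hch2
    exact fun m hm => (List.pairwise_cons.1 hp).1 m hm
  refine ⟨⟨by simp, ?_, ?_, ?_⟩, ?_⟩
  · cases A with
    | nil => exact hhead
    | cons a A' => simpa using hhead
  · rwa [List.getLast?_append_of_ne_nil _ (by simp)]
  · simp only [List.Chain', List.isChain_append] at hch ⊢
    exact ⟨hch.1, hch2, by simpa using hch.2.2⟩
  · rw [List.nodup_append] at hnd ⊢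
    refine ⟨hnd.1, hnd2, fun a ha _ hb hab => ?_⟩
    have h1 := hA a ha
    have h2 : idx x ≤ idx a := by
      rcases List.mem_cons.1 (hab.symm ▸ hb : a ∈ x :: M) with rfl | hb
      · exact le_refl _
      · exact (hM a hb).le
    exact absurd h1 (not_lt.2 h2)

lemma lex_append_or_prefix {a b : List ℕ} (h : List.Lex (· < ·) a b) :
    a <+: b ∨ ∀ t : List ℕ, List.Lex (· < ·) (a ++ t) (b ++ t) := by
  induction h with
  | nil => exact Or.inl ⟨_, rfl⟩
  | @cons c l₁ l₂ h ih =>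
    rcases ih with ⟨s, rfl⟩ | h'
    · exact Or.inl ⟨s, rfl⟩
    · exact Or.inr fun t => List.Lex.cons (h' t)
  | rel h => exact Or.inr fun t => List.Lex.rel h

lemma eq_of_lex_sandwich {a b t₁ t₂ : List ℕ} {z : ℕ}
    (ha : a.getLast? = some z) (hb : b.getLast? = some z)
    (hna : a.Nodup) (hnb : b.Nodup)
    (h1 : ¬ List.Lex (· < ·) (b ++ t₁) (a ++ t₁))
    (h2 : ¬ List.Lex (· < ·) (a ++ t₂) (b ++ t₂)) : a = b := by
  have key : ∀ (p q : List ℕ), p.getLast? = some z → q.getLast? = some z →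
      q.Nodup → p <+: q → p = q := by
    rintro p q hp hq hnq ⟨s, rfl⟩
    cases s with
    | nil => simp
    | cons c s' =>
      exfalso
      have hzq : (p ++ c :: s').getLast? = (c :: s').getLast? :=
        List.getLast?_append_of_ne_nil _ (by simp)
      rw [hq] at hzq
      have hz1 : z ∈ p := List.mem_of_mem_getLast? hp
      have hz2 : z ∈ c :: s' := List.mem_of_mem_getLast? hzq.symm
      exact (List.disjoint_of_nodup_append hnq) hz1 hz2
  rcases lt_trichotomy a b with h | h | h
  · rcases lex_append_or_prefix (h) with hp | h'
    · exact key a b ha hb hnb hp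
    · exact absurd (h' t₂) h2
  · exact h
  · rcases lex_append_or_prefix (h) with hp | h'
    · exact (key b a hb ha hna hp).symm
    · exact absurd (h' t₁) h1

end Helpers

/-- Fix a vertex `v` in a finite DAG with a topological numbering `idx`,
and for ancestors `u` of `v` (vertices `u ≠ v` from which `v` is reachable) consider the
lexicographically-first shortest paths `P(u, v)`. For every vertex `x ≠ v` lying on some
`P(u, v)`, the vertex immediately following `x` is the same in every path `P(u, v)` that
contains `x`; hence the union of these paths is a tree with sink `v` in which every vertex
other than `v` has a unique outgoing edge. -/
theorem stmt11 (V : Type) [Fintype V] (E : V → V → Prop) (w : V → V → ℝ)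
    (idx : V → ℕ) (hinj : Function.Injective idx)
    (htopo : ∀ a b, E a b → idx a < idx b)
    (v : V) (u₁ u₂ : V) (hu₁ : u₁ ≠ v) (hu₂ : u₂ ≠ v)
    (hr₁ : Reaches E u₁ v) (hr₂ : Reaches E u₂ v)
    (L₁ L₂ : List V) (hL₁ : IsLexFirstSP E w idx u₁ v L₁) (hL₂ : IsLexFirstSP E w idx u₂ v L₂)
    (x : V) (hxv : x ≠ v)
    (A₁ : List V) (y₁ : V) (B₁ : List V) (hd₁ : L₁ = A₁ ++ x :: y₁ :: B₁)
    (A₂ : List V) (y₂ : V) (B₂ : List V) (hd₂ : L₂ = A₂ ++ x :: y₂ :: B₂) :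
    y₁ = y₂ := by
  obtain ⟨hp₁, hmin₁, hlex₁⟩ := hL₁
  obtain ⟨hp₂, hmin₂, hlex₂⟩ := hL₂
  subst hd₁ hd₂
  set S₁ : List V := x :: y₁ :: B₁ with hS₁
  set S₂ : List V := x :: y₂ :: B₂ with hS₂
  have hpS₁ : IsPath E x v S₁ := path_suffix hp₁
  have hpS₂ : IsPath E x v S₂ := path_suffix hp₂
  -- spliced paths
  have hsp₁ : IsPath E u₁ v (A₁ ++ S₂) := splice htopo hp₁ hpS₂
  have hsp₂ : IsPath E u₂ v (A₂ ++ S₁) := splice htopo hp₂ hpS₁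
  -- weights equal
  have hw1 : walkWeight w (A₁ ++ S₁) = walkWeight w (A₁ ++ [x]) + walkWeight w S₁ := by
    simpa using walkWeight_split w x A₁ (y₁ :: B₁)
  have hw1' : walkWeight w (A₁ ++ S₂) = walkWeight w (A₁ ++ [x]) + walkWeight w S₂ := by
    simpa using walkWeight_split w x A₁ (y₂ :: B₂)
  have hw2 : walkWeight w (A₂ ++ S₂) = walkWeight w (A₂ ++ [x]) + walkWeight w S₂ := by
    simpa using walkWeight_split w x A₂ (y₂ :: B₂)
  have hw2' : walkWeight w (A₂ ++ S₁) = walkWeight w (A₂ ++ [x]) + walkWeight w S₁ := by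
    simpa using walkWeight_split w x A₂ (y₁ :: B₁)
  have h12 : walkWeight w S₁ ≤ walkWeight w S₂ := by
    have := hmin₁ _ hsp₁
    rw [hw1, hw1'] at this; linarith
  have h21 : walkWeight w S₂ ≤ walkWeight w S₁ := by
    have := hmin₂ _ hsp₂
    rw [hw2, hw2'] at this; linarith
  have hweq : walkWeight w S₁ = walkWeight w S₂ := le_antisymm h12 h21
  -- lex conditions
  have hl₁ := hlex₁ _ hsp₁ (by rw [hw1, hw1', hweq])
  have hl₂ := hlex₂ _ hsp₂ (by rw [hw2, hw2', hweq])
  rw [List.reverse_append, List.reverse_append, List.map_append, List.map_append] at hl₁ hl₂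
  -- set up the lex sandwich
  set a : List ℕ := S₁.reverse.map idx with ha
  set b : List ℕ := S₂.reverse.map idx with hb
  have hlast : ∀ (S : List V), S.head? = some x → (S.reverse.map idx).getLast? = some (idx x) := by
    intro S hS
    rw [List.getLast?_map, List.getLast?_reverse, hS]; rfl
  have hnda : a.Nodup := (List.nodup_reverse.2 hpS₁.2).map hinj
  have hndb : b.Nodup := (List.nodup_reverse.2 hpS₂.2).map hinj
  have hab : a = b := eq_of_lex_sandwich (hlast S₁ rfl) (hlast S₂ rfl) hnda hndb hl₁ hl₂
  have : S₁ = S₂ := by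
    exact List.reverse_injective (List.map_injective_iff.2 hinj hab)
  exact ((by simpa [hS₁, hS₂] using this : y₁ = y₂ ∧ B₁ = B₂)).1
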